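/- Let n ≥ 1 and k ≥ 1 be integers, and let λ_1, …, λ_r be positive integers with Σ_{j=1}^r λ_j ≤ n. Suppose there exists a partition ρ of n that contains (λ_1, …, λ_r) as a sub-multiset and that generates all k-partitions of n. Then for every multiset μ = {μ_1, …, μ_l} of positive integers that generates all k-partitions of n − Σ_{j=1}^r λ_j, the combined multiset {λ_1, …, λ_r, μ_1, …, μ_l} generates all k-partitions of n. -/

import Mathlib

/-- A partition of `n`: a multiset of positive integers summing to `n`. -/
def IsPartition (n : ℕ) (lam : Multiset ℕ) : Prop :=
  (∀ x ∈ lam, 0 < x) ∧ lam.sum = n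

/-- `μ` generates `lam`: `μ` decomposes into disjoint sub-multisets, one summing
to each part of `lam`. -/
def Generates (μ lam : Multiset ℕ) : Prop :=
  ∃ P : Multiset (Multiset ℕ), P.sum = μ ∧ P.map Multiset.sum = lam

/-- `μ` generates all partitions of `n` with at most `k` parts. -/
def GeneratesAll (n k : ℕ) (μ : Multiset ℕ) : Prop :=
  ∀ lam : Multiset ℕ, IsPartition n lam → Multiset.card lam ≤ k → Generates μ lam

/-- The greedy partition: repeatedly take `⌈remainder / k⌉`. -/
def greedyList (k : ℕ) : ℕ → List ℕ
  | 0 => []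
  | (n + 1) =>
    if hk : k = 0 then []
    else (n + k) / k :: greedyList k (n + 1 - (n + k) / k)
  termination_by n => n
  decreasing_by
    have h1 : 1 ≤ (n + k) / k :=
      (Nat.one_le_div_iff (Nat.pos_of_ne_zero hk)).mpr (Nat.le_add_left k n)
    omega

lemma sum_sum (T : Multiset (Multiset ℕ)) : (T.map Multiset.sum).sum = T.sum.sum := by
  induction T using Multiset.induction with
  | empty => simp
  | cons a T ih => simp [ih]

lemma split_le_sum (P : Multiset (Multiset ℕ)) :
    ∀ L : Multiset ℕ, L ≤ P.sum →
    ∃ Q : Multiset (Multiset ℕ × Multiset ℕ),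
      Q.map (fun q => q.1 + q.2) = P ∧ (Q.map Prod.fst).sum = L := by
  induction P using Multiset.induction with
  | empty =>
    intro L hL
    simp only [Multiset.sum_zero, Multiset.le_zero] at hL
    exact ⟨0, by simp, by simp [hL]⟩
  | cons a P ih =>
    intro L hL
    have h1 : L ∩ a ≤ a := Multiset.inter_le_right
    have h2 : L - a ≤ P.sum := by
      rw [Multiset.sub_le_iff_le_add]
      rw [Multiset.sum_cons] at hL
      rwa [add_comm]
    have h3 : L ∩ a + (L - a) = L := by
      ext x
      simp only [Multiset.count_add, Multiset.count_inter, Multiset.count_sub]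
      omega
    obtain ⟨Q, hQ1, hQ2⟩ := ih (L - a) h2
    refine ⟨(L ∩ a, a - (L ∩ a)) ::ₘ Q, ?_, ?_⟩
    · rw [Multiset.map_cons, hQ1]
      congr 1
      exact add_tsub_cancel_of_le h1
    · rw [Multiset.map_cons, Multiset.sum_cons, hQ2]
      exact h3

lemma combine (Q : Multiset (Multiset ℕ × Multiset ℕ)) :
    ∀ R : Multiset (Multiset ℕ),
      R.map Multiset.sum = ((Q.map (fun q => q.2.sum)).filter (fun x => x ≠ 0)) →
      ∃ S : Multiset (Multiset ℕ),
        S.sum = (Q.map Prod.fst).sum + R.sum ∧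
        S.map Multiset.sum = Q.map (fun q => q.1.sum + q.2.sum) := by
  induction Q using Multiset.induction with
  | empty =>
    intro R hR
    simp only [Multiset.map_zero, Multiset.filter_zero, Multiset.map_eq_zero] at hR
    exact ⟨0, by simp [hR], by simp⟩
  | cons q Q ih =>
    intro R hR
    by_cases h : q.2.sum = 0
    · rw [Multiset.map_cons, Multiset.filter_cons_of_neg _ (by simp [h])] at hR
      obtain ⟨S, hS1, hS2⟩ := ih R hR
      refine ⟨q.1 ::ₘ S, ?_, ?_⟩
      · rw [Multiset.sum_cons, hS1, Multiset.map_cons, Multiset.sum_cons, add_assoc]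
      · rw [Multiset.map_cons, hS2, Multiset.map_cons, h, add_zero]
    · rw [Multiset.map_cons, Multiset.filter_cons_of_pos _ (by simp [h])] at hR
      obtain ⟨r, hrR, hr1, hr2⟩ := (Multiset.map_eq_cons _ _ _ _).mpr hR
      obtain ⟨S, hS1, hS2⟩ := ih (R.erase r) hr2
      have hRsum : r + (R.erase r).sum = R.sum := by
        rw [← Multiset.sum_cons, Multiset.cons_erase hrR]
      refine ⟨(q.1 + r) ::ₘ S, ?_, ?_⟩
      · rw [Multiset.sum_cons, hS1, Multiset.map_cons, Multiset.sum_cons, ← hRsum]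
        abel
      · rw [Multiset.map_cons, hS2, Multiset.map_cons, Multiset.sum_add, hr1]


/-- if `(λ_1, …, λ_r)` (a multiset `L` of positive integers with
`L.sum ≤ n`) can be completed to a partition `ρ` of `n` generating all
`k`-partitions of `n`, then for any multiset `μ` of positive integers generating
all `k`-partitions of `n - L.sum`, the union `L + μ` generates all
`k`-partitions of `n`. -/
theorem completion_generates (n k : ℕ) (hn : 1 ≤ n) (hk : 1 ≤ k)
    (L : Multiset ℕ) (hLpos : ∀ x ∈ L, 0 < x) (hLsum : L.sum ≤ n)
    (hcomplete : ∃ ρ : Multiset ℕ, IsPartition n ρ ∧ L ≤ ρ ∧ GeneratesAll n k ρ)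
    (μ : Multiset ℕ) (hμpos : ∀ x ∈ μ, 0 < x)
    (hμ : GeneratesAll (n - L.sum) k μ) :
    GeneratesAll n k (L + μ) := by
  obtain ⟨ρ, ⟨hρpos, hρsum⟩, hLρ, hρgen⟩ := hcomplete
  intro lam hlam hcard
  obtain ⟨P, hP1, hP2⟩ := hρgen lam hlam hcard
  have hLP : L ≤ P.sum := by rw [hP1]; exact hLρ
  obtain ⟨Q, hQ1, hQ2⟩ := split_le_sum P L hLP
  -- λ = Q mapped to block sums
  have hmap : Q.map (fun q => q.1.sum + q.2.sum) = lam := by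
    rw [← hP2, ← hQ1, Multiset.map_map]
    apply Multiset.map_congr rfl
    intro q _
    simp [Multiset.sum_add]
  have htot : (Q.map (fun q => q.1.sum)).sum + (Q.map (fun q => q.2.sum)).sum = n := by
    have h := (Multiset.sum_map_add :
      (Q.map fun q => q.1.sum + q.2.sum).sum
        = (Q.map (fun q => q.1.sum)).sum + (Q.map (fun q => q.2.sum)).sum)
    rw [← h, hmap, hlam.2]
  have hfst : (Q.map (fun q => q.1.sum)).sum = L.sum := by
    have h1 : Q.map (fun q => q.1.sum) = (Q.map Prod.fst).map Multiset.sum := by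
      rw [Multiset.map_map]; rfl
    rw [h1, sum_sum, hQ2]
  set lam' := (Q.map (fun q => q.2.sum)).filter (fun x => x ≠ 0) with hlam'def
  have hfilt : lam'.sum = (Q.map (fun q => q.2.sum)).sum := by
    rw [hlam'def]
    have := Multiset.filter_add_not (fun x => x ≠ 0) (Q.map (fun q => q.2.sum))
    have h0 : ((Q.map (fun q => q.2.sum)).filter (fun x => ¬ x ≠ 0)).sum = 0 := by
      apply Multiset.sum_eq_zero
      intro x hx
      have := Multiset.of_mem_filter hx
      simpa using this
    calc lam'.sum = lam'.sum + ((Q.map (fun q => q.2.sum)).filter (fun x => ¬ x ≠ 0)).sum := by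
          rw [h0, add_zero]
      _ = (Q.map (fun q => q.2.sum)).sum := by rw [← Multiset.sum_add, this]
  have hlam'part : IsPartition (n - L.sum) lam' := by
    constructor
    · intro x hx
      have := Multiset.of_mem_filter hx
      simp at this
      omega
    · rw [hfilt]; omega
  have hlam'card : Multiset.card lam' ≤ k := by
    have h1 : Multiset.card lam' ≤ Multiset.card (Q.map (fun q => q.2.sum)) :=
      Multiset.card_le_card (Multiset.filter_le _ _)
    have h2 : Multiset.card (Q.map (fun q => q.2.sum)) = Multiset.card lam := by
      rw [Multiset.card_map, ← hmap, Multiset.card_map]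
    omega
  obtain ⟨R, hR1, hR2⟩ := hμ lam' hlam'part hlam'card
  obtain ⟨S, hS1, hS2⟩ := combine Q R hR2
  exact ⟨S, by rw [hS1, hQ2, hR1], by rw [hS2, hmap]⟩
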